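/- arXiv:2110.12533 — 2 statements merged into one kernel-verified Lean document; each statement's English description precedes it below -/
import Mathlib

section
/- Suppose the step size is constant, t_k = t > 0 for all k, and suppose f* = inf_{x ∈ X} Σ_{i=1}^m f_i(x) > −∞. Then liminf_{k→∞} f(x_k) ≤ f* + 2 m² t C² W + (1/2) m² t C², where f = Σ_{i=1}^m f_i. -/
open RealInnerProductSpace

lemma exists_subgradient' {n : ℕ} (f : EuclideanSpace ℝ (Fin n) → ℝ)
    (hf : ConvexOn ℝ Set.univ f) (p : EuclideanSpace ℝ (Fin n)) :
    ∃ g : EuclideanSpace ℝ (Fin n), ∀ y, f p + ⟪g, y - p⟫ ≤ f y := by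
  have hcont : Continuous f := by
    rw [← continuousOn_univ]
    exact hf.continuousOn isOpen_univ
  set S : Set (EuclideanSpace ℝ (Fin n) × ℝ) := {q | f q.1 < q.2} with hS
  have hconv : Convex ℝ S := by
    have := hf.convex_strict_epigraph
    simpa [hS] using this
  have hopen : IsOpen S := isOpen_lt (hcont.comp continuous_fst) continuous_snd
  have hnot : (p, f p) ∉ S := by simp [hS]
  obtain ⟨φ, hφ⟩ := geometric_hahn_banach_open_point hconv hopen hnot
  set c : ℝ := φ (0, 1) with hc
  have hsplit : ∀ (y : EuclideanSpace ℝ (Fin n)) (r : ℝ), φ (y, r) = φ (y, 0) + r * c := by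
    intro y r
    have : (y, r) = (y, (0:ℝ)) + r • ((0 : EuclideanSpace ℝ (Fin n)), (1:ℝ)) := by
      simp [Prod.ext_iff]
    rw [this, map_add, map_smul]
    simp [hc, smul_eq_mul]
  have hcneg : c < 0 := by
    have h1 : φ (p, f p + 1) < φ (p, f p) := hφ _ (by simp [hS])
    rw [hsplit p (f p + 1), hsplit p (f p)] at h1
    nlinarith
  have key : ∀ y, φ (y, 0) + f y * c ≤ φ (p, 0) + f p * c := by
    intro y
    refine le_of_forall_pos_le_add fun ε hε => ?_
    have hεc : 0 < ε / (-c) := div_pos hε (by linarith)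
    have h1 : φ (y, f y + ε / (-c)) < φ (p, f p) := hφ _ (by simp only [hS, Set.mem_setOf_eq]; linarith)
    rw [hsplit y (f y + ε / (-c)), hsplit p (f p)] at h1
    have hcne : c ≠ 0 := ne_of_lt hcneg
    have h3 : (ε / -c) * c = -ε := by
      rw [div_mul_eq_mul_div, mul_div_assoc, div_neg, div_self hcne]
      ring
    nlinarith [h3]
  refine ⟨(InnerProductSpace.toDual ℝ _).symm
    ((-(1/c)) • ((φ.comp (ContinuousLinearMap.inl ℝ _ ℝ)))), fun y => ?_⟩
  have hip : ∀ v : EuclideanSpace ℝ (Fin n),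
      ⟪(InnerProductSpace.toDual ℝ _).symm
        ((-(1/c)) • ((φ.comp (ContinuousLinearMap.inl ℝ _ ℝ)))), v⟫ = (-(1/c)) * φ (v, 0) := by
    intro v
    rw [InnerProductSpace.toDual_symm_apply]
    simp
  rw [hip]
  have h2 := key y
  have hsub : φ (y - p, 0) = φ (y, 0) - φ (p, 0) := by
    have : ((y - p : EuclideanSpace ℝ (Fin n)), (0:ℝ)) = (y, (0:ℝ)) - (p, (0:ℝ)) := by
      simp [Prod.ext_iff]
    rw [this, map_sub]
  rw [hsub]
  have hcne : c ≠ 0 := ne_of_lt hcneg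
  field_simp
  rw [div_le_iff_of_neg hcneg]
  nlinarith


lemma proj_vi' {n : ℕ} {X : Set (EuclideanSpace ℝ (Fin n))} (hXconvex : Convex ℝ X)
    (P : EuclideanSpace ℝ (Fin n) → EuclideanSpace ℝ (Fin n))
    (hP : ∀ u, P u ∈ X ∧ ∀ y ∈ X, ‖u - P u‖ ≤ ‖u - y‖) :
    ∀ u, ∀ y ∈ X, ⟪u - P u, y - P u⟫ ≤ 0 := by
  intro u y hy
  by_contra hcon
  push_neg at hcon
  set a := u - P u
  set b := y - P u with hb
  have hbne : ‖b‖ ≠ 0 := by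
    intro h0
    rw [norm_eq_zero] at h0
    have : (⟪a, b⟫ : ℝ) = 0 := by rw [h0, inner_zero_right]
    linarith
  have hbpos : 0 < ‖b‖ ^ 2 := by positivity
  have hkey : ∀ s : ℝ, 0 < s → s ≤ 1 → 2 * s * ⟪a, b⟫ ≤ s ^ 2 * ‖b‖ ^ 2 := by
    intro s hs hs1
    have hz : P u + s • b ∈ X := by
      have := hXconvex (hP u).1 hy (a := 1 - s) (b := s) (by linarith) (le_of_lt hs) (by ring)
      convert this using 1
      rw [hb]
      module
    have h1 : ‖u - P u‖ ≤ ‖u - (P u + s • b)‖ := (hP u).2 _ hz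
    have h2 : u - (P u + s • b) = a - s • b := by rw [hb]; module
    have h3 : ‖a - s • b‖ ^ 2 = ‖a‖ ^ 2 - 2 * s * ⟪a, b⟫ + s ^ 2 * ‖b‖ ^ 2 := by
      rw [norm_sub_sq_real, real_inner_smul_right, norm_smul]
      simp [mul_pow]
      ring
    rw [h2] at h1
    nlinarith [norm_nonneg a, norm_nonneg (a - s • b)]
  set s₀ := min 1 (⟪a, b⟫ / ‖b‖ ^ 2) with hs₀
  have hs₀pos : 0 < s₀ := lt_min one_pos (div_pos hcon hbpos)
  have h4 := hkey s₀ hs₀pos (min_le_left _ _)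
  have h5 : s₀ ≤ ⟪a, b⟫ / ‖b‖ ^ 2 := min_le_right _ _
  have h6 : s₀ * ‖b‖ ^ 2 ≤ ⟪a, b⟫ := by
    rw [← le_div_iff₀ hbpos]; exact h5
  nlinarith


set_option maxHeartbeats 1000000 in
/-- Constant step size, `f* = inf_X f > -∞`: then
`liminf f (x k) ≤ f* + 2 m² t C² W + (1/2) m² t C²`. -/
theorem incremental_cp_constant_step_suboptimality_bound
    (n m W : ℕ) (hW : 1 ≤ W)
    (X : Set (EuclideanSpace ℝ (Fin n)))
    (hXne : X.Nonempty) (hXclosed : IsClosed X) (hXconvex : Convex ℝ X)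
    (f : Fin m → EuclideanSpace ℝ (Fin n) → ℝ)
    (hfconv : ∀ i, ConvexOn ℝ Set.univ (f i))
    (C : ℝ) (hC : 0 < C)
    -- every subgradient of any `f i` at any point of `X` has norm at most `C`
    (hCbound : ∀ i, ∀ z ∈ X, ∀ g : EuclideanSpace ℝ (Fin n),
      (∀ y, f i z + ⟪g, y - z⟫ ≤ f i y) → ‖g‖ ≤ C)
    -- `P` is the Euclidean projection onto `X`
    (P : EuclideanSpace ℝ (Fin n) → EuclideanSpace ℝ (Fin n))
    (hP : ∀ u, P u ∈ X ∧ ∀ y ∈ X, ‖u - P u‖ ≤ ‖u - y‖)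
    -- positive step sizes
    (t : ℕ → ℝ) (ht : ∀ k, 0 < t k)
    -- the iterates, lying in `X`
    (x : ℕ → EuclideanSpace ℝ (Fin n)) (hx : ∀ k, x k ∈ X)
    -- the index sets `B k i ⊆ {0, …, min k (W-1)}`
    (B : ℕ → Fin m → Finset ℕ)
    (hB : ∀ k i, ∀ l ∈ B k i, l ≤ min k (W - 1))
    -- `g i j` is a subgradient of `f i` at `x j` (used for `j = k - l`, `l ∈ B k i`)
    (g : Fin m → ℕ → EuclideanSpace ℝ (Fin n))
    (hg : ∀ k i, ∀ l ∈ B k i, ∀ y,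
      f i (x (k - l)) + ⟪g i (k - l), y - x (k - l)⟫ ≤ f i y)
    -- convex weights
    (α : ℕ → Fin m → ℕ → ℝ)
    (hα0 : ∀ k i l, 0 ≤ α k i l)
    (hα1 : ∀ k i, (B k i).Nonempty → ∑ l ∈ B k i, α k i l = 1)
    (hα2 : ∀ k i, B k i = ∅ → ∀ l, α k i l = 0)
    -- the update rule
    (hupdate : ∀ k, x (k + 1) =
      P (x k - t k • ∑ i : Fin m, ∑ l ∈ B k i, α k i l • g i (k - l)))    -- every component is evaluated at least once in every `W` iterations
    (hfull : ∀ k, W - 1 ≤ k → ∀ i, (B k i).Nonempty)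
    -- constant step size
    (tc : ℝ) (htc : 0 < tc) (hconst : ∀ k, t k = tc)
    -- `fstar = inf_{z ∈ X} f z` is finite
    (fstar : ℝ)
    (hfstar : IsGLB ((fun z => ∑ i : Fin m, f i z) '' X) fstar) :
    Filter.liminf (fun k => ((∑ i : Fin m, f i (x k) : ℝ) : EReal))
        Filter.atTop ≤
      ((fstar + 2 * (m : ℝ) ^ 2 * tc * C ^ 2 * (W : ℝ) +
          1 / 2 * (m : ℝ) ^ 2 * tc * C ^ 2 : ℝ) : EReal) := by
  classical
  rcases Nat.eq_zero_or_pos m with hm0 | hm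
  · subst hm0
    have himg : ((fun z => ∑ i : Fin 0, f i z) '' X) = {(0:ℝ)} := by
      have : (fun z : EuclideanSpace ℝ (Fin n) => ∑ i : Fin 0, f i z) = fun _ => (0:ℝ) := by
        funext z; simp
      rw [this]
      exact Set.Nonempty.image_const hXne 0
    rw [himg] at hfstar
    have hf0 : fstar = 0 := hfstar.unique (isGLB_singleton)
    simp only [Finset.univ_eq_empty, Finset.sum_empty, hf0, Nat.cast_zero]
    rw [Filter.liminf_const]
    norm_num
  have hmR : (0:ℝ) < (m:ℝ) := by exact_mod_cast hm
  set F : EuclideanSpace ℝ (Fin n) → ℝ := fun z => ∑ i : Fin m, f i z with hF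
  set s : ℕ → EuclideanSpace ℝ (Fin n) :=
    fun k => ∑ i : Fin m, ∑ l ∈ B k i, α k i l • g i (k - l) with hsdef
  have hgnorm : ∀ k (i : Fin m), ∀ l ∈ B k i, ‖g i (k - l)‖ ≤ C :=
    fun k i l hl => hCbound i _ (hx _) _ (hg k i l hl)
  have hαsum : ∀ k i, ∑ l ∈ B k i, α k i l ≤ 1 := by
    intro k i
    rcases Finset.eq_empty_or_nonempty (B k i) with h | h
    · rw [h]; simp
    · rw [hα1 k i h]
  have hsnorm : ∀ k, ‖s k‖ ≤ (m:ℝ) * C := by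
    intro k
    calc ‖s k‖ ≤ ∑ i : Fin m, ‖∑ l ∈ B k i, α k i l • g i (k - l)‖ := norm_sum_le _ _
      _ ≤ ∑ i : Fin m, ∑ l ∈ B k i, ‖α k i l • g i (k - l)‖ :=
          Finset.sum_le_sum fun i _ => norm_sum_le _ _
      _ ≤ ∑ i : Fin m, ∑ l ∈ B k i, α k i l * C := by
          refine Finset.sum_le_sum fun i _ => Finset.sum_le_sum fun l hl => ?_
          rw [norm_smul, Real.norm_eq_abs, abs_of_nonneg (hα0 k i l)]
          exact mul_le_mul_of_nonneg_left (hgnorm k i l hl) (hα0 k i l)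
      _ ≤ ∑ _i : Fin m, C := by
          refine Finset.sum_le_sum fun i _ => ?_
          rw [← Finset.sum_mul]
          calc (∑ l ∈ B k i, α k i l) * C ≤ 1 * C :=
                mul_le_mul_of_nonneg_right (hαsum k i) hC.le
            _ = C := one_mul C
      _ = (m:ℝ) * C := by simp [mul_comm]
  have hVI := proj_vi' hXconvex P hP
  have hPy : ∀ u, ∀ y ∈ X, ‖P u - y‖ ≤ ‖u - y‖ := by
    intro u y hy
    have h1 := hVI u y hy
    have h2 : u - y = (u - P u) + (P u - y) := by module
    have h4 : ‖u - y‖^2 = ‖u - P u‖^2 + 2*⟪u - P u, P u - y⟫ + ‖P u - y‖^2 := by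
      rw [h2, norm_add_sq_real]
    have h3 : ⟪u - P u, P u - y⟫ = -⟪u - P u, y - P u⟫ := by
      rw [← inner_neg_right]; congr 1; module
    nlinarith [norm_nonneg (P u - y), norm_nonneg (u - y), sq_nonneg ‖u - P u‖]
  have hstep : ∀ k, ‖x (k+1) - x k‖ ≤ tc * ((m:ℝ) * C) := by
    intro k
    have hupd : x (k+1) = P (x k - t k • s k) := hupdate k
    have h1 := hVI (x k - t k • s k) (x k) (hx k)
    rw [← hupd] at h1
    have h2 : x k - t k • s k - x (k+1) = (x k - x (k+1)) - t k • s k := by module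
    rw [h2, inner_sub_left, real_inner_smul_left, real_inner_self_eq_norm_sq] at h1
    have h3 : ⟪s k, x k - x (k+1)⟫ ≤ ‖s k‖ * ‖x k - x (k+1)‖ := real_inner_le_norm _ _
    have h4 : ‖x k - x (k+1)‖^2 ≤ t k * (‖s k‖ * ‖x k - x (k+1)‖) := by nlinarith [ht k]
    rw [norm_sub_rev]
    by_contra hcon
    push_neg at hcon
    have h5 : t k * ‖s k‖ ≤ tc * ((m:ℝ) * C) := by
      rw [hconst k]
      exact mul_le_mul_of_nonneg_left (hsnorm k) htc.le
    nlinarith [norm_nonneg (x k - x (k+1)), mul_nonneg (mul_nonneg htc.le hmR.le) hC.le]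
  have hdist : ∀ k l : ℕ, ‖x k - x (k - l)‖ ≤ (l:ℝ) * (tc * ((m:ℝ) * C)) := by
    intro k l
    induction l with
    | zero => simp
    | succ l ih =>
      have hcpos : (0:ℝ) ≤ tc * ((m:ℝ) * C) := by positivity
      rcases le_or_gt (l+1) k with h | h
      · have hkl : k - l = (k - (l+1)) + 1 := by omega
        calc ‖x k - x (k - (l+1))‖
            ≤ ‖x k - x (k - l)‖ + ‖x (k - l) - x (k - (l+1))‖ :=
              norm_sub_le_norm_sub_add_norm_sub _ _ _
          _ ≤ (l:ℝ) * (tc * ((m:ℝ) * C)) + tc * ((m:ℝ) * C) := by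
              refine add_le_add ih ?_
              rw [hkl]
              exact hstep (k - (l+1))
          _ = ((l+1:ℕ):ℝ) * (tc * ((m:ℝ) * C)) := by push_cast; ring
      · have hkl : k - (l+1) = k - l := by omega
        rw [hkl]
        refine ih.trans ?_
        have : (l:ℝ) ≤ ((l+1:ℕ):ℝ) := by push_cast; linarith
        exact mul_le_mul_of_nonneg_right this hcpos
  have hlip : ∀ (i : Fin m) z w, z ∈ X → f i z ≤ f i w + C * ‖z - w‖ := by
    intro i z w hz
    obtain ⟨g', hg'⟩ := exists_subgradient' (f i) (hfconv i) z
    have hn : ‖g'‖ ≤ C := hCbound i z hz g' hg'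
    have h1 := hg' w
    have h2 : -(‖g'‖ * ‖w - z‖) ≤ ⟪g', w - z⟫ :=
      neg_le_of_abs_le (abs_real_inner_le_norm _ _)
    have h3 : ‖g'‖ * ‖w - z‖ ≤ C * ‖z - w‖ := by
      rw [norm_sub_rev w z]
      exact mul_le_mul_of_nonneg_right hn (norm_nonneg _)
    linarith
  -- the main per-step inequality
  set R : ℝ := 2 * C * (((W:ℝ) - 1) * (tc * ((m:ℝ) * C))) with hRdef
  have hmain : ∀ y ∈ X, ∀ k, W - 1 ≤ k →
      ‖x (k+1) - y‖^2 ≤ ‖x k - y‖^2 - 2*tc*(F (x k) - F y)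
        + 2*tc*((m:ℝ)*R) + tc^2*((m:ℝ)*C)^2 := by
    intro y hy k hk
    have hdelay : ∀ (i : Fin m), ∀ l ∈ B k i,
        ‖x k - x (k - l)‖ ≤ ((W:ℝ) - 1) * (tc * ((m:ℝ) * C)) := by
      intro i l hl
      refine (hdist k l).trans ?_
      have hlW : l ≤ W - 1 := (hB k i l hl).trans (min_le_right _ _)
      have : (l:ℝ) ≤ (W:ℝ) - 1 := by
        have := (Nat.cast_le (α := ℝ)).mpr hlW
        rwa [Nat.cast_sub hW, Nat.cast_one] at this
      have hcpos : (0:ℝ) ≤ tc * ((m:ℝ) * C) := by positivity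
      exact mul_le_mul_of_nonneg_right this hcpos
    have hinner : ∀ (i : Fin m), ∀ l ∈ B k i,
        f i (x k) - f i y - R ≤ ⟪g i (k - l), x k - y⟫ := by
      intro i l hl
      have e1 := hg k i l hl y
      have e2 := hlip i (x k) (x (k - l)) (hx k)
      have e3 : (x k) - y = (x (k - l) - y) + (x k - x (k - l)) := by module
      rw [e3, inner_add_right]
      have e4 : ⟪g i (k - l), x (k - l) - y⟫ = -⟪g i (k - l), y - x (k - l)⟫ := by
        rw [← inner_neg_right]; congr 1; module
      have e5 : -(‖g i (k - l)‖ * ‖x k - x (k - l)‖) ≤ ⟪g i (k - l), x k - x (k - l)⟫ :=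
        neg_le_of_abs_le (abs_real_inner_le_norm _ _)
      have e6 : ‖g i (k - l)‖ * ‖x k - x (k - l)‖ ≤ C * (((W:ℝ) - 1) * (tc * ((m:ℝ) * C))) :=
        mul_le_mul (hgnorm k i l hl) (hdelay i l hl) (norm_nonneg _) hC.le
      have e7 : ‖x k - x (k - l)‖ ≤ ((W:ℝ) - 1) * (tc * ((m:ℝ) * C)) := hdelay i l hl
      have e8 : C * ‖x k - x (k - l)‖ ≤ C * (((W:ℝ) - 1) * (tc * ((m:ℝ) * C))) :=
        mul_le_mul_of_nonneg_left e7 hC.le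
      rw [e4]
      rw [hRdef]
      linarith
    have hsum : ∀ i : Fin m,
        f i (x k) - f i y - R ≤ ∑ l ∈ B k i, α k i l * ⟪g i (k - l), x k - y⟫ := by
      intro i
      have hne := hfull k hk i
      calc f i (x k) - f i y - R
          = ∑ l ∈ B k i, α k i l * (f i (x k) - f i y - R) := by
            rw [← Finset.sum_mul, hα1 k i hne, one_mul]
        _ ≤ ∑ l ∈ B k i, α k i l * ⟪g i (k - l), x k - y⟫ :=
            Finset.sum_le_sum fun l hl =>
              mul_le_mul_of_nonneg_left (hinner i l hl) (hα0 k i l)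
    have hsk : F (x k) - F y - (m:ℝ)*R ≤ ⟪s k, x k - y⟫ := by
      have e1 : ⟪s k, x k - y⟫
          = ∑ i : Fin m, ∑ l ∈ B k i, α k i l * ⟪g i (k - l), x k - y⟫ := by
        rw [hsdef]
        rw [sum_inner]
        congr 1; funext i
        rw [sum_inner]
        congr 1; funext l
        rw [real_inner_smul_left]
      have e2 : ∑ i : Fin m, (f i (x k) - f i y - R)
          ≤ ∑ i : Fin m, ∑ l ∈ B k i, α k i l * ⟪g i (k - l), x k - y⟫ :=
        Finset.sum_le_sum fun i _ => hsum i
      have e3 : ∑ i : Fin m, (f i (x k) - f i y - R) = F (x k) - F y - (m:ℝ) * R := by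
        simp only [hF, Finset.sum_sub_distrib, Finset.sum_const, Finset.card_univ,
          Fintype.card_fin, nsmul_eq_mul]
      rw [e1]
      linarith
    have hxk1 : x (k+1) = P (x k - tc • s k) := by rw [hupdate k, hconst k]
    have hle : ‖x (k+1) - y‖ ≤ ‖(x k - tc • s k) - y‖ := by
      rw [hxk1]; exact hPy _ y hy
    have hexp : ‖(x k - tc • s k) - y‖^2
        = ‖x k - y‖^2 - 2*tc*⟪s k, x k - y⟫ + tc^2*‖s k‖^2 := by
      have h0 : (x k - tc • s k) - y = (x k - y) - tc • s k := by module
      rw [h0, norm_sub_sq_real, real_inner_smul_right, norm_smul, Real.norm_eq_abs,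
        abs_of_pos htc, mul_pow, real_inner_comm (x k - y) (s k)]
      ring
    have hsq : ‖x (k+1) - y‖^2 ≤ ‖(x k - tc • s k) - y‖^2 :=
      pow_le_pow_left₀ (norm_nonneg _) hle 2
    have hs2 : ‖s k‖^2 ≤ ((m:ℝ)*C)^2 := pow_le_pow_left₀ (norm_nonneg _) (hsnorm k) 2
    have t1 : 2*tc*(F (x k) - F y - (m:ℝ)*R) ≤ 2*tc*⟪s k, x k - y⟫ :=
      mul_le_mul_of_nonneg_left hsk (by positivity)
    have t2 : tc^2*‖s k‖^2 ≤ tc^2*((m:ℝ)*C)^2 :=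
      mul_le_mul_of_nonneg_left hs2 (by positivity)
    nlinarith [hsq, hexp, t1, t2]
  -- contradiction argument
  by_contra hcon
  push_neg at hcon
  have hev := Filter.eventually_lt_of_lt_liminf hcon
  have hevR : ∀ᶠ k in Filter.atTop,
      fstar + 2*(m:ℝ)^2*tc*C^2*(W:ℝ) + 1/2*(m:ℝ)^2*tc*C^2 < F (x k) :=
    hev.mono fun k hk => by exact_mod_cast hk
  obtain ⟨N, hN⟩ := Filter.eventually_atTop.mp hevR
  set ε : ℝ := tc*(m:ℝ)^2*C^2 with hεdef
  have hεpos : 0 < ε := by rw [hεdef]; positivity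
  obtain ⟨y, hyX, hyF⟩ : ∃ y ∈ X, F y < fstar + ε := by
    by_contra h
    push_neg at h
    have hlb : fstar + ε ∈ lowerBounds (F '' X) := by
      rintro v ⟨z, hz, rfl⟩
      exact h z hz
    have := hfstar.2 hlb
    linarith
  set M := max N (W - 1) with hM
  have hkey : ∀ j : ℕ, ‖x (M + j) - y‖^2 ≤ ‖x M - y‖^2 - (j:ℝ) * (2*tc*ε) := by
    intro j
    induction j with
    | zero => simp
    | succ j ih =>
      have hk1 : W - 1 ≤ M + j := le_trans (le_max_right N (W-1)) (Nat.le_add_right M j)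
      have hm1 := hmain y hyX (M + j) hk1
      have hNle : N ≤ M + j := le_trans (le_max_left _ _) (Nat.le_add_right _ _)
      have hFk := hN (M + j) hNle
      have hFdiff : 2*(m:ℝ)^2*tc*C^2*(W:ℝ) + 1/2*(m:ℝ)^2*tc*C^2 - ε
          < F (x (M+j)) - F y := by linarith
      have hmm : M + (j+1) = (M + j) + 1 := by omega
      rw [hmm]
      have h2tc : (0:ℝ) < 2*tc := by linarith
      have t3 := mul_lt_mul_of_pos_left hFdiff h2tc
      have hRid2 : 2*tc*((m:ℝ)*R) = 4*tc^2*(m:ℝ)^2*C^2*((W:ℝ)-1) := by rw [hRdef]; ring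
      have hε2 : 2*tc*ε = 2*tc^2*(m:ℝ)^2*C^2 := by rw [hεdef]; ring
      push_cast
      nlinarith [ih, hm1, t3, hRid2, hε2]
  obtain ⟨j, hj⟩ := exists_nat_gt (‖x M - y‖^2 / (2*tc*ε))
  have hpos2 : (0:ℝ) < 2*tc*ε := by positivity
  have h3 : ‖x M - y‖^2 < (j:ℝ) * (2*tc*ε) := by
    rw [div_lt_iff₀ hpos2] at hj; linarith
  have h2 := hkey j
  nlinarith [sq_nonneg ‖x (M + j) - y‖, h2, h3]
end

section
/- Suppose the step sizes satisfy t_k > 0 for all k, t_k ≥ t_{k+1} for all k, lim_{k→∞} t_k = 0, and Σ_{k=0}^∞ t_k = ∞. Then liminf_{k→∞} f(x_k) = f*, where f = Σ_{i=1}^m f_i and f* = inf_{x ∈ X} f(x) ∈ ℝ ∪ {−∞} (the equality being in the extended reals: if f* = −∞ then liminf f(x_k) = −∞). -/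
open RealInnerProductSpace

private lemma exists_subgradient_aux {n : ℕ} (f : EuclideanSpace ℝ (Fin n) → ℝ)
    (hf : ConvexOn ℝ Set.univ f) (x : EuclideanSpace ℝ (Fin n)) :
    ∃ g : EuclideanSpace ℝ (Fin n), ∀ y, f x + ⟪g, y - x⟫ ≤ f y := by
  have hcont : Continuous f := by
    rw [← continuousOn_univ]
    exact hf.continuousOn isOpen_univ
  set S : Set (EuclideanSpace ℝ (Fin n) × ℝ) := {p | f p.1 < p.2} with hS
  have hSopen : IsOpen S := isOpen_lt (hcont.comp continuous_fst) continuous_snd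
  have hSconv : Convex ℝ S := by
    rintro ⟨p1, p2⟩ hp ⟨q1, q2⟩ hq a b ha hb hab
    simp only [hS, Set.mem_setOf_eq] at hp hq ⊢
    have h1 := hf.2 (Set.mem_univ p1) (Set.mem_univ q1) ha hb hab
    have h2 : a * f p1 + b * f q1 < a * p2 + b * q2 := by
      rcases ha.eq_or_lt with rfl | ha'
      · have hb1 : b = 1 := by linarith
        subst hb1; simpa using hq
      · have hqle : b * f q1 ≤ b * q2 := mul_le_mul_of_nonneg_left hq.le hb
        have hplt : a * f p1 < a * p2 := mul_lt_mul_of_pos_left hp ha'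
        linarith
    have h3 : f ((a • (p1, p2) + b • (q1, q2)).1) = f (a • p1 + b • q1) := rfl
    have h4 : (a • ((p1 : EuclideanSpace ℝ (Fin n)), p2) + b • (q1, q2)).2
        = a * p2 + b * q2 := rfl
    rw [h3, h4]
    calc f (a • p1 + b • q1) ≤ a * f p1 + b * f q1 := by
          simpa [smul_eq_mul] using h1
      _ < a * p2 + b * q2 := h2
  have hxnot : (x, f x) ∉ S := by simp [hS]
  obtain ⟨φ, hφ⟩ := geometric_hahn_banach_open_point hSconv hSopen hxnot
  set c : ℝ := φ (0, 1) with hc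
  have hdecomp : ∀ (y : EuclideanSpace ℝ (Fin n)) (r : ℝ), φ (y, r) = φ (y, 0) + r * c := by
    intro y r
    have h : ((y : EuclideanSpace ℝ (Fin n)), r)
        = (y, (0:ℝ)) + r • ((0 : EuclideanSpace ℝ (Fin n)), (1:ℝ)) := by
      simp [Prod.ext_iff]
    rw [h, map_add, map_smul, smul_eq_mul, hc]
  have hcneg : c < 0 := by
    have h := hφ (x, f x + 1) (by simp [hS])
    rw [hdecomp x (f x + 1), hdecomp x (f x)] at h; linarith
  have key : ∀ y, φ (y, 0) + f y * c ≤ φ (x, 0) + f x * c := by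
    intro y
    by_contra hcon
    push_neg at hcon
    set ε : ℝ := (φ (y,0) + f y * c - (φ (x,0) + f x * c)) / (-c) with hε
    have hεpos : 0 < ε := div_pos (by linarith) (by linarith)
    have h := hφ (y, f y + ε) (by simp [hS, hεpos])
    rw [hdecomp y (f y + ε), hdecomp x (f x)] at h
    have hne : -c ≠ 0 := by intro h0; rw [show c = 0 by linarith] at hcneg; linarith
    have h2 : ε * (-c) = φ (y,0) + f y * c - (φ (x,0) + f x * c) := by
      rw [hε]; exact div_mul_cancel₀ _ hne
    nlinarith [h, h2]
  set ψ : EuclideanSpace ℝ (Fin n) →L[ℝ] ℝ :=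
    φ.comp (ContinuousLinearMap.inl ℝ (EuclideanSpace ℝ (Fin n)) ℝ) with hψ
  have hψa : ∀ y, ψ y = φ (y, 0) := fun y => rfl
  set v := (InnerProductSpace.toDual ℝ (EuclideanSpace ℝ (Fin n))).symm ψ with hv
  have hva : ∀ y, ⟪v, y⟫ = φ (y, 0) := by
    intro y
    rw [hv, InnerProductSpace.toDual_symm_apply]
    exact hψa y
  refine ⟨(-c)⁻¹ • v, fun y => ?_⟩
  have h1 : ⟪(-c)⁻¹ • v, y - x⟫ = (-c)⁻¹ * (φ (y - x, 0)) := by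
    rw [real_inner_smul_left, hva]
  have h3 : φ (y - x, (0:ℝ)) = φ (y, 0) - φ (x, 0) := by
    have h : ((y - x : EuclideanSpace ℝ (Fin n)), (0:ℝ)) = (y, (0:ℝ)) - (x, (0:ℝ)) := by
      simp [Prod.ext_iff]
    rw [h, map_sub]
  have h2 : φ (y,0) - φ (x,0) ≤ (f y - f x) * (-c) := by nlinarith [key y]
  have h4 := mul_le_mul_of_nonneg_left h2 (inv_nonneg.2 (by linarith : (0:ℝ) ≤ -c))
  have hne : -c ≠ 0 := by intro h0; rw [show c = 0 by linarith] at hcneg; linarith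
  have h5 : (-c)⁻¹ * ((f y - f x) * (-c)) = f y - f x := by
    rw [mul_comm ((-c)⁻¹), mul_assoc, mul_inv_cancel₀ hne, mul_one]
  rw [h1, h3]
  linarith [h4, h5]

private lemma proj_nonexp {n : ℕ} {X : Set (EuclideanSpace ℝ (Fin n))}
    (hXconvex : Convex ℝ X) {P : EuclideanSpace ℝ (Fin n) → EuclideanSpace ℝ (Fin n)}
    (hP : ∀ u, P u ∈ X ∧ ∀ y ∈ X, ‖u - P u‖ ≤ ‖u - y‖)
    (u z : EuclideanSpace ℝ (Fin n)) (hz : z ∈ X) : ‖P u - z‖ ≤ ‖u - z‖ := by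
  have hkey : ⟪u - P u, z - P u⟫ ≤ 0 := by
    by_contra hcon
    push_neg at hcon
    set p := ⟪u - P u, z - P u⟫ with hp
    set q := ‖z - P u‖^2 with hq
    have hq0 : 0 < q := by
      rcases eq_or_ne z (P u) with he | hne
      · rw [hp, he] at hcon; simp at hcon
      · have h1 : z - P u ≠ 0 := sub_ne_zero.2 hne
        rw [hq]
        exact pow_pos (norm_pos_iff.2 h1) 2
    set θ := min 1 (p / q) with hθ
    have hθ0 : 0 < θ := lt_min one_pos (div_pos hcon hq0)
    have hθ1 : θ ≤ 1 := min_le_left _ _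
    have hw : P u + θ • (z - P u) ∈ X := by
      have h := hXconvex (hP u).1 hz (by linarith : (0:ℝ) ≤ 1 - θ) hθ0.le (by ring)
      convert h using 1
      module
    have hle := (hP u).2 _ hw
    have hvec : u - (P u + θ • (z - P u)) = (u - P u) - θ • (z - P u) := by
      module
    have hexp : ‖u - (P u + θ • (z - P u))‖^2
        = ‖u - P u‖^2 - 2*(θ*p) + θ^2 * q := by
      rw [hvec, norm_sub_sq_real, real_inner_smul_right, norm_smul, Real.norm_eq_abs,
        mul_pow, sq_abs, hq, hp]
    have hsq : ‖u - P u‖^2 ≤ ‖u - (P u + θ • (z - P u))‖^2 := by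
      nlinarith [hle, norm_nonneg (u - P u), norm_nonneg (u - (P u + θ • (z - P u)))]
    have h2 : 2 * (θ * p) ≤ θ^2 * q := by rw [hexp] at hsq; linarith
    have h3 : θ * q ≤ p := by
      have hm : θ ≤ p / q := min_le_right _ _
      calc θ * q ≤ (p/q) * q := mul_le_mul_of_nonneg_right hm hq0.le
        _ = p := div_mul_cancel₀ _ hq0.ne'
    nlinarith [h2, h3, hθ0, hcon]
  have hexp : ‖u - z‖^2 = ‖u - P u‖^2 + 2 * ⟪u - P u, P u - z⟫ + ‖P u - z‖^2 := by
    have h : u - z = (u - P u) + (P u - z) := by abel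
    rw [h, norm_add_sq_real]
  have hinner : 0 ≤ ⟪u - P u, P u - z⟫ := by
    have h : ⟪u - P u, P u - z⟫ = - ⟪u - P u, z - P u⟫ := by
      rw [← inner_neg_right, neg_sub]
    rw [h]; linarith
  nlinarith [norm_nonneg (P u - z), norm_nonneg (u - z), sq_nonneg (‖u - P u‖),
    mul_self_nonneg (‖P u - z‖ - ‖u - z‖)]

set_option maxHeartbeats 1600000 in
/-- Diminishing, nonsummable step sizes: then
`liminf f (x k) = inf_X f` in the extended reals. -/
theorem incremental_cp_diminishing_step_liminf
    (n m W : ℕ) (hW : 1 ≤ W)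
    (X : Set (EuclideanSpace ℝ (Fin n)))
    (hXne : X.Nonempty) (hXclosed : IsClosed X) (hXconvex : Convex ℝ X)
    (f : Fin m → EuclideanSpace ℝ (Fin n) → ℝ)
    (hfconv : ∀ i, ConvexOn ℝ Set.univ (f i))
    (C : ℝ) (hC : 0 < C)
    -- every subgradient of any `f i` at any point of `X` has norm at most `C`
    (hCbound : ∀ i, ∀ z ∈ X, ∀ g : EuclideanSpace ℝ (Fin n),
      (∀ y, f i z + ⟪g, y - z⟫ ≤ f i y) → ‖g‖ ≤ C)
    -- `P` is the Euclidean projection onto `X`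
    (P : EuclideanSpace ℝ (Fin n) → EuclideanSpace ℝ (Fin n))
    (hP : ∀ u, P u ∈ X ∧ ∀ y ∈ X, ‖u - P u‖ ≤ ‖u - y‖)
    -- positive step sizes
    (t : ℕ → ℝ) (ht : ∀ k, 0 < t k)
    -- the iterates, lying in `X`
    (x : ℕ → EuclideanSpace ℝ (Fin n)) (hx : ∀ k, x k ∈ X)
    -- the index sets `B k i ⊆ {0, …, min k (W-1)}`
    (B : ℕ → Fin m → Finset ℕ)
    (hB : ∀ k i, ∀ l ∈ B k i, l ≤ min k (W - 1))
    -- `g i j` is a subgradient of `f i` at `x j` (used for `j = k - l`, `l ∈ B k i`)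
    (g : Fin m → ℕ → EuclideanSpace ℝ (Fin n))
    (hg : ∀ k i, ∀ l ∈ B k i, ∀ y,
      f i (x (k - l)) + ⟪g i (k - l), y - x (k - l)⟫ ≤ f i y)
    -- convex weights
    (α : ℕ → Fin m → ℕ → ℝ)
    (hα0 : ∀ k i l, 0 ≤ α k i l)
    (hα1 : ∀ k i, (B k i).Nonempty → ∑ l ∈ B k i, α k i l = 1)
    (hα2 : ∀ k i, B k i = ∅ → ∀ l, α k i l = 0)
    -- the update rule
    (hupdate : ∀ k, x (k + 1) =
      P (x k - t k • ∑ i : Fin m, ∑ l ∈ B k i, α k i l • g i (k - l)))    -- every component is evaluated at least once in every `W` iterations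
    (hfull : ∀ k, W - 1 ≤ k → ∀ i, (B k i).Nonempty)
    -- nonincreasing step sizes tending to `0` with divergent sum
    (hmono : ∀ k, t (k + 1) ≤ t k)
    (hlim : Filter.Tendsto t Filter.atTop (nhds 0))
    (hsum : Filter.Tendsto (fun N => ∑ k ∈ Finset.range N, t k)
      Filter.atTop Filter.atTop) :
    Filter.liminf (fun k => ((∑ i : Fin m, f i (x k) : ℝ) : EReal))
        Filter.atTop =
      ⨅ z ∈ X, ((∑ i : Fin m, f i z : ℝ) : EReal) := by
  classical
  set d : ℕ → EuclideanSpace ℝ (Fin n) :=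
    fun k => ∑ i : Fin m, ∑ l ∈ B k i, α k i l • g i (k - l) with hd
  have hupd : ∀ k, x (k + 1) = P (x k - t k • d k) := by
    intro k; simp only [hd]; exact hupdate k
  have tanti : Antitone t := antitone_nat_of_succ_le hmono
  have hgnorm : ∀ k i, ∀ l ∈ B k i, ‖g i (k - l)‖ ≤ C := fun k i l hl =>
    hCbound i _ (hx _) _ (hg k i l hl)
  have hsumα_le : ∀ k i, ∑ l ∈ B k i, α k i l ≤ 1 := by
    intro k i
    rcases (B k i).eq_empty_or_nonempty with he | hne
    · rw [he]; simp
    · rw [hα1 k i hne]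
  have hdin : ∀ k i, ‖∑ l ∈ B k i, α k i l • g i (k - l)‖ ≤ C := by
    intro k i
    calc ‖∑ l ∈ B k i, α k i l • g i (k - l)‖
        ≤ ∑ l ∈ B k i, ‖α k i l • g i (k - l)‖ := norm_sum_le _ _
      _ = ∑ l ∈ B k i, α k i l * ‖g i (k - l)‖ := by
          refine Finset.sum_congr rfl fun l hl => ?_
          rw [norm_smul, Real.norm_eq_abs, abs_of_nonneg (hα0 k i l)]
      _ ≤ ∑ l ∈ B k i, α k i l * C :=
          Finset.sum_le_sum fun l hl =>
            mul_le_mul_of_nonneg_left (hgnorm k i l hl) (hα0 k i l)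
      _ = (∑ l ∈ B k i, α k i l) * C := by rw [Finset.sum_mul]
      _ ≤ 1 * C := mul_le_mul_of_nonneg_right (hsumα_le k i) hC.le
      _ = C := one_mul C
  have hdnorm : ∀ k, ‖d k‖ ≤ (m : ℝ) * C := by
    intro k
    calc ‖d k‖ ≤ ∑ i : Fin m, ‖∑ l ∈ B k i, α k i l • g i (k - l)‖ := norm_sum_le _ _
      _ ≤ ∑ _i : Fin m, C := Finset.sum_le_sum fun i _ => hdin k i
      _ = (m : ℝ) * C := by simp [mul_comm]
  have hmCpos : (0:ℝ) ≤ (m:ℝ) * C := by positivity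
  have hstep : ∀ k, ‖x (k + 1) - x k‖ ≤ t k * ((m:ℝ) * C) := by
    intro k
    rw [hupd k]
    calc ‖P (x k - t k • d k) - x k‖ ≤ ‖(x k - t k • d k) - x k‖ :=
          proj_nonexp hXconvex hP _ _ (hx k)
      _ = ‖t k • d k‖ := by rw [show (x k - t k • d k) - x k = -(t k • d k) by abel, norm_neg]
      _ = t k * ‖d k‖ := by rw [norm_smul, Real.norm_eq_abs, abs_of_pos (ht k)]
      _ ≤ t k * ((m:ℝ) * C) := mul_le_mul_of_nonneg_left (hdnorm k) (ht k).le
  have hdist : ∀ l k, l ≤ k → ‖x k - x (k - l)‖ ≤ (l:ℝ) * t (k - l) * ((m:ℝ) * C) := by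
    intro l
    induction l with
    | zero => intro k _; simp
    | succ l ih =>
      intro k hk
      have hlk : l ≤ k := by omega
      have hj : k - l = (k - (l + 1)) + 1 := by omega
      have tri : ‖x k - x (k - (l+1))‖
          ≤ ‖x k - x (k - l)‖ + ‖x (k - l) - x (k - (l+1))‖ := by
        calc ‖x k - x (k - (l+1))‖
            = ‖(x k - x (k - l)) + (x (k - l) - x (k - (l+1)))‖ := by congr 1; abel
          _ ≤ _ := norm_add_le _ _
      have h2 : ‖x (k - l) - x (k - (l+1))‖ ≤ t (k - (l+1)) * ((m:ℝ) * C) := by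
        rw [hj]; exact hstep (k - (l+1))
      have h1 : ‖x k - x (k - l)‖ ≤ (l:ℝ) * t (k - (l+1)) * ((m:ℝ) * C) := by
        refine (ih k hlk).trans ?_
        have htle : t (k - l) ≤ t (k - (l+1)) := by rw [hj]; exact hmono _
        have hl0 : (0:ℝ) ≤ (l:ℝ) := by positivity
        exact mul_le_mul_of_nonneg_right (mul_le_mul_of_nonneg_left htle hl0) hmCpos
      calc ‖x k - x (k - (l+1))‖
          ≤ (l:ℝ) * t (k-(l+1)) * ((m:ℝ)*C) + t (k-(l+1)) * ((m:ℝ)*C) := by linarith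
        _ = ((l+1:ℕ):ℝ) * t (k - (l+1)) * ((m:ℝ)*C) := by push_cast; ring
  -- main descent inequality
  have hdesc : ∀ z ∈ X, ∀ k, W - 1 ≤ k →
      ‖x (k+1) - z‖^2 ≤ ‖x k - z‖^2
        - 2 * t k * ((∑ i : Fin m, f i (x k)) - (∑ i : Fin m, f i z)
            - (m:ℝ) * (2 * C * (((W-1 : ℕ):ℝ) * t (k - (W-1)) * ((m:ℝ) * C))))
        + t k^2 * ((m:ℝ) * C)^2 := by
    intro z hz k hk
    set Dk : ℝ := ((W-1 : ℕ):ℝ) * t (k - (W-1)) * ((m:ℝ) * C) with hDk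
    have hDk0 : 0 ≤ Dk := by
      rw [hDk]
      have := (ht (k - (W-1))).le
      positivity
    have hterm : ∀ i : Fin m, ∀ l ∈ B k i,
        f i (x k) - f i z - 2 * C * Dk ≤ ⟪g i (k - l), x k - z⟫ := by
      intro i l hl
      have hlk : l ≤ k := (hB k i l hl).trans (min_le_left _ _)
      have hlW : l ≤ W - 1 := (hB k i l hl).trans (min_le_right _ _)
      have hxd : ‖x k - x (k - l)‖ ≤ Dk := by
        refine (hdist l k hlk).trans ?_
        rw [hDk]
        have ht1 : t (k - l) ≤ t (k - (W-1)) := tanti (by omega)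
        have hl0 : (0:ℝ) ≤ (l:ℝ) := by positivity
        have hlW' : (l:ℝ) ≤ ((W-1 : ℕ):ℝ) := by exact_mod_cast hlW
        have hbase : (l:ℝ) * t (k - l) ≤ ((W-1:ℕ):ℝ) * t (k - (W-1)) :=
          mul_le_mul hlW' ht1 (ht (k-l)).le (by positivity)
        exact mul_le_mul_of_nonneg_right hbase hmCpos
      obtain ⟨gk, hgk⟩ := exists_subgradient_aux (f i) (hfconv i) (x k)
      have hgkC : ‖gk‖ ≤ C := hCbound i (x k) (hx k) gk hgk
      have hlow : f i (x k) - C * Dk ≤ f i (x (k - l)) := by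
        have h := hgk (x (k - l))
        have hcs : |⟪gk, x (k - l) - x k⟫| ≤ C * Dk := by
          calc |⟪gk, x (k - l) - x k⟫| ≤ ‖gk‖ * ‖x (k - l) - x k‖ :=
                abs_real_inner_le_norm _ _
            _ ≤ C * Dk := by
                rw [norm_sub_rev]
                exact mul_le_mul hgkC hxd (norm_nonneg _) hC.le
        have hn := neg_abs_le ⟪gk, x (k - l) - x k⟫
        linarith
      have hsub : f i (x (k - l)) - f i z ≤ ⟪g i (k - l), x (k - l) - z⟫ := by
        have h := hg k i l hl z
        have h2 : ⟪g i (k - l), z - x (k - l)⟫ = - ⟪g i (k - l), x (k - l) - z⟫ := by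
          rw [← inner_neg_right, neg_sub]
        linarith
      have hsplit : ⟪g i (k - l), x k - z⟫
          = ⟪g i (k - l), x (k - l) - z⟫ + ⟪g i (k - l), x k - x (k - l)⟫ := by
        rw [← inner_add_right]; congr 1; abel
      have hcs2 : -(C * Dk) ≤ ⟪g i (k - l), x k - x (k - l)⟫ := by
        have h1 : |⟪g i (k - l), x k - x (k - l)⟫| ≤ C * Dk := by
          calc |⟪g i (k-l), x k - x (k-l)⟫| ≤ ‖g i (k-l)‖ * ‖x k - x (k-l)‖ :=
                abs_real_inner_le_norm _ _
            _ ≤ C * Dk := mul_le_mul (hgnorm k i l hl) hxd (norm_nonneg _) hC.le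
        linarith [neg_abs_le ⟪g i (k - l), x k - x (k - l)⟫]
      rw [hsplit]
      linarith
    have hsum_i : ∀ i : Fin m, f i (x k) - f i z - 2 * C * Dk
        ≤ ∑ l ∈ B k i, α k i l * ⟪g i (k - l), x k - z⟫ := by
      intro i
      have hne := hfull k hk i
      calc f i (x k) - f i z - 2*C*Dk
          = ∑ l ∈ B k i, α k i l * (f i (x k) - f i z - 2*C*Dk) := by
            rw [← Finset.sum_mul, hα1 k i hne, one_mul]
        _ ≤ ∑ l ∈ B k i, α k i l * ⟪g i (k - l), x k - z⟫ :=
            Finset.sum_le_sum fun l hl =>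
              mul_le_mul_of_nonneg_left (hterm i l hl) (hα0 k i l)
    have hinner : (∑ i : Fin m, f i (x k)) - (∑ i : Fin m, f i z) - (m:ℝ) * (2*C*Dk)
        ≤ ⟪d k, x k - z⟫ := by
      have hrw : ⟪d k, x k - z⟫
          = ∑ i : Fin m, ∑ l ∈ B k i, α k i l * ⟪g i (k - l), x k - z⟫ := by
        simp only [hd]
        rw [sum_inner]
        refine Finset.sum_congr rfl fun i _ => ?_
        rw [sum_inner]
        refine Finset.sum_congr rfl fun l _ => ?_
        rw [real_inner_smul_left]
      rw [hrw]
      have h1 : ∑ i : Fin m, (f i (x k) - f i z - 2*C*Dk)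
          ≤ ∑ i : Fin m, ∑ l ∈ B k i, α k i l * ⟪g i (k-l), x k - z⟫ :=
        Finset.sum_le_sum fun i _ => hsum_i i
      calc (∑ i : Fin m, f i (x k)) - (∑ i : Fin m, f i z) - (m:ℝ)*(2*C*Dk)
          = ∑ i : Fin m, (f i (x k) - f i z - 2*C*Dk) := by
            rw [Finset.sum_sub_distrib, Finset.sum_sub_distrib, Finset.sum_const,
              Finset.card_univ, Fintype.card_fin]
            push_cast; ring
        _ ≤ _ := h1
    have hexp : ‖(x k - t k • d k) - z‖^2
        = ‖x k - z‖^2 - 2 * (t k * ⟪x k - z, d k⟫) + t k^2 * ‖d k‖^2 := by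
      have h : (x k - t k • d k) - z = (x k - z) - t k • d k := by abel
      rw [h, norm_sub_sq_real, real_inner_smul_right, norm_smul, Real.norm_eq_abs,
        mul_pow, sq_abs]
    have hproj : ‖x (k+1) - z‖ ≤ ‖(x k - t k • d k) - z‖ := by
      rw [hupd k]; exact proj_nonexp hXconvex hP _ _ hz
    have hsq : ‖x (k+1) - z‖^2 ≤ ‖(x k - t k • d k) - z‖^2 := by
      nlinarith [hproj, norm_nonneg (x (k+1) - z), norm_nonneg ((x k - t k • d k) - z)]
    have hdsq : ‖d k‖^2 ≤ ((m:ℝ)*C)^2 := by nlinarith [hdnorm k, norm_nonneg (d k)]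
    have hcomm : ⟪x k - z, d k⟫ = ⟪d k, x k - z⟫ := real_inner_comm _ _
    have e1 : 2 * t k * ((∑ i : Fin m, f i (x k)) - (∑ i : Fin m, f i z) - (m:ℝ)*(2*C*Dk))
        ≤ 2 * (t k * ⟪x k - z, d k⟫) := by
      rw [hcomm]
      have h := mul_le_mul_of_nonneg_left hinner (ht k).le
      nlinarith [h]
    have e2 : t k^2 * ‖d k‖^2 ≤ t k^2 * ((m:ℝ)*C)^2 :=
      mul_le_mul_of_nonneg_left hdsq (sq_nonneg _)
    rw [hexp] at hsq
    linarith [hsq, e1, e2]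
  -- conclusion
  refine le_antisymm ?_ (Filter.le_liminf_of_le (by isBoundedDefault)
    (Filter.Eventually.of_forall fun k => iInf₂_le (x k) (hx k)))
  refine le_iInf₂ fun z hz => ?_
  by_contra hcon
  push_neg at hcon
  obtain ⟨r, hr1, hr2⟩ := EReal.exists_between_coe_real hcon
  have hev1 : ∀ᶠ k in Filter.atTop, (r : EReal) < ((∑ i : Fin m, f i (x k) : ℝ) : EReal) :=
    Filter.eventually_lt_of_lt_liminf hr2
  have hFz : (∑ i : Fin m, f i z) < r := by exact_mod_cast hr1
  set ε : ℝ := r - ∑ i : Fin m, f i z with hε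
  have hεpos : 0 < ε := by rw [hε]; linarith
  have htail : Filter.Tendsto (fun k => t (k - (W-1))) Filter.atTop (nhds 0) :=
    hlim.comp (Filter.tendsto_sub_atTop_nat (W-1))
  have hsmall : Filter.Tendsto
      (fun k => (2 * ((m:ℝ) * (2 * C * (((W-1:ℕ):ℝ) * ((m:ℝ)*C))))) * t (k - (W-1))
        + t k * ((m:ℝ)*C)^2) Filter.atTop (nhds 0) := by
    have h1 := htail.const_mul (2 * ((m:ℝ) * (2 * C * (((W-1:ℕ):ℝ) * ((m:ℝ)*C)))))
    have h2 := hlim.mul_const (((m:ℝ)*C)^2)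
    have h3 := h1.add h2
    simpa using h3
  have hev2 : ∀ᶠ k in Filter.atTop,
      (2 * ((m:ℝ) * (2 * C * (((W-1:ℕ):ℝ) * ((m:ℝ)*C))))) * t (k - (W-1))
        + t k * ((m:ℝ)*C)^2 < ε :=
    hsmall.eventually_lt_const hεpos
  have hev3 : ∀ᶠ k in Filter.atTop, W - 1 ≤ k := Filter.eventually_ge_atTop (W-1)
  obtain ⟨K, hK⟩ := Filter.eventually_atTop.1 ((hev1.and hev2).and hev3)
  have hdec : ∀ k, K ≤ k → ‖x (k+1) - z‖^2 ≤ ‖x k - z‖^2 - t k * ε := by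
    intro k hk
    obtain ⟨⟨h1, h2⟩, h3⟩ := hK k hk
    have hr' : r < ∑ i : Fin m, f i (x k) := by exact_mod_cast h1
    have hd1 := hdesc z hz k h3
    have hA : ε ≤ (∑ i : Fin m, f i (x k)) - ∑ i : Fin m, f i z := by rw [hε]; linarith
    nlinarith [mul_le_mul_of_nonneg_left h2.le (ht k).le,
      mul_le_mul_of_nonneg_left hA (ht k).le, ht k, sq_nonneg (t k)]
  have htel : ∀ j, ‖x (K + j) - z‖^2
      ≤ ‖x K - z‖^2 - (∑ i ∈ Finset.range j, t (K + i)) * ε := by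
    intro j
    induction j with
    | zero => simp
    | succ j ih =>
      have h1 := hdec (K + j) (Nat.le_add_right _ _)
      rw [Finset.sum_range_succ, show K + (j+1) = (K + j) + 1 from rfl]
      nlinarith [ih, h1]
  have hub : ∀ j, (∑ i ∈ Finset.range j, t (K + i)) * ε ≤ ‖x K - z‖^2 := by
    intro j
    have h := htel j
    nlinarith [sq_nonneg ‖x (K + j) - z‖]
  have hdiv : Filter.Tendsto (fun j => (∑ i ∈ Finset.range j, t (K + i)) * ε)
      Filter.atTop Filter.atTop := by
    have h0 : Filter.Tendsto (fun j => ∑ k ∈ Finset.range (j + K), t k)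
        Filter.atTop Filter.atTop := hsum.comp (Filter.tendsto_add_atTop_nat K)
    have h1 : Filter.Tendsto
        (fun j => (∑ k ∈ Finset.range (j + K), t k) + -(∑ k ∈ Finset.range K, t k))
        Filter.atTop Filter.atTop :=
      Filter.tendsto_atTop_add_const_right _ _ h0
    have heq : ∀ j, (∑ k ∈ Finset.range (j + K), t k) + -(∑ k ∈ Finset.range K, t k)
        = ∑ i ∈ Finset.range j, t (K + i) := by
      intro j
      have h2 : (∑ k ∈ Finset.range K, t k) + ∑ k ∈ Finset.Ico K (j + K), t k
          = ∑ k ∈ Finset.range (j + K), t k := by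
        simp only [Finset.range_eq_Ico]
        exact Finset.sum_Ico_consecutive t (Nat.zero_le K) (by omega)
      have h3 : ∑ k ∈ Finset.Ico K (j + K), t k = ∑ i ∈ Finset.range j, t (K + i) := by
        rw [Finset.sum_Ico_eq_sum_range, show j + K - K = j by omega]
      linarith [h2, h3]
    exact ((h1.congr heq).atTop_mul_const hεpos)
  obtain ⟨j, hj⟩ := (hdiv.eventually_gt_atTop (‖x K - z‖^2)).exists
  exact absurd (hub j) (not_le.2 hj)
end
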